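/- arXiv:1311.3922 — 2 statements merged into one kernel-verified Lean document; each statement's English description precedes it below -/
import Mathlib

section
/- Define polynomials B̃_T ∈ ℤ[x] recursively by B̃_∅ = 1 and B̃_T = x·B̃_R·Δ(B̃_L), where L and R are the left and right subtrees of T. Then for every binary tree T of size n and every k ≥ 0, the coefficient of x^k in B̃_T(x) equals the number of binary trees T' with T' ≥ T in the Tamari order whose rightmost branch (nodes reached from the root by following right children only) contains exactly k nodes. In particular, B̃_T(1) equals the number of binary trees T' with T' ≥ T. -/
/-- Planar binary trees: empty, or a node with a left and a right subtree. -/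
inductive BinTree : Type where
  | leaf : BinTree
  | node : BinTree → BinTree → BinTree
  deriving DecidableEq

namespace BinTree

/-- Size: number of internal nodes. -/
def size : BinTree → ℕ
  | leaf => 0
  | node l r => l.size + r.size + 1

/-- `sub T o a b` : in the binary-search-tree labelling of `T` shifted by `o`
(its labels are `o+1, …, o+T.size`), the node labelled `a` lies in the subtree
rooted at the node labelled `b`, i.e. `a ⊴_T b`. -/
def sub : BinTree → ℕ → ℕ → ℕ → Prop
  | leaf, _, _, _ => False
  | node l r, o, a, b =>
      (b = o + l.size + 1 ∧ o + 1 ≤ a ∧ a ≤ o + l.size + r.size + 1) ∨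
      l.sub o a b ∨ r.sub (o + l.size + 1) a b

/-- One right rotation, applied at any position of the tree. -/
inductive Rot : BinTree → BinTree → Prop
  | base (A B C : BinTree) : Rot (node (node A B) C) (node A (node B C))
  | left {l l' : BinTree} (r : BinTree) : Rot l l' → Rot (node l r) (node l' r)
  | right (l : BinTree) {r r' : BinTree} : Rot r r' → Rot (node l r) (node l r')

end BinTree

/-- Tamari order: reflexive-transitive closure of right rotation. -/
def tamariLE : BinTree → BinTree → Prop := Relation.ReflTransGen BinTree.Rot

/-- `incRel T a c` : `a` is below `c` in the initial forest `inc T`. -/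
def incRel (T : BinTree) (a c : ℕ) : Prop := a < c ∧ T.sub 0 a c

/-- `decRel T c a` : `c` is below `a` in the final forest `dec T`. -/
def decRel (T : BinTree) (c a : ℕ) : Prop := a < c ∧ T.sub 0 c a

/-- `Δ(g) = (x·g(x) − g(1)) / (x − 1)`, an exact polynomial division. -/
noncomputable def polyDelta (g : Polynomial ℤ) : Polynomial ℤ :=
  Polynomial.divByMonic (Polynomial.X * g - Polynomial.C (g.eval 1))
    (Polynomial.X - Polynomial.C 1)

/-- The mirrored Tamari polynomial `B̃_T`, with `B̃_∅ = 1` and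
`B̃_T = x·B̃_R·Δ(B̃_L)`. -/
noncomputable def BTt : BinTree → Polynomial ℤ
  | BinTree.leaf => 1
  | BinTree.node l r => Polynomial.X * BTt r * polyDelta (BTt l)

/-- Number of nodes on the rightmost branch. -/
def rightDepth : BinTree → ℕ
  | BinTree.leaf => 0
  | BinTree.node _ r => rightDepth r + 1

namespace TamariProof

open BinTree Polynomial Finset

/-! ### Basic lemmas about rotations -/

theorem size_rot {T T' : BinTree} (h : Rot T T') : T'.size = T.size := by
  induction h with
  | base A B C => simp [BinTree.size]; omega
  | left r _ ih => simp [BinTree.size, ih]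
  | right l _ ih => simp [BinTree.size, ih]

theorem size_tamari {T T' : BinTree} (h : tamariLE T T') : T'.size = T.size := by
  induction h with
  | refl => rfl
  | tail _ h ih => rw [size_rot h, ih]

theorem tamari_refl (T : BinTree) : tamariLE T T := Relation.ReflTransGen.refl

theorem tamari_trans {a b c : BinTree} (h : tamariLE a b) (h' : tamariLE b c) :
    tamariLE a c := Relation.ReflTransGen.trans h h'

theorem tamari_node_left {l l' : BinTree} (r : BinTree) (h : tamariLE l l') :
    tamariLE (node l r) (node l' r) :=
  Relation.ReflTransGen.lift (fun x => node x r) (fun _ _ hr => Rot.left r hr) _ _ h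

theorem tamari_node_right (l : BinTree) {r r' : BinTree} (h : tamariLE r r') :
    tamariLE (node l r) (node l r') :=
  Relation.ReflTransGen.lift (fun x => node l x) (fun _ _ hr => Rot.right l hr) _ _ h

theorem tamari_node {l l' r r' : BinTree} (hl : tamariLE l l') (hr : tamariLE r r') :
    tamariLE (node l r) (node l' r') :=
  tamari_trans (tamari_node_left r hl) (tamari_node_right l' hr)

theorem tamari_leaf {T' : BinTree} (h : tamariLE BinTree.leaf T') : T' = BinTree.leaf := by
  induction h with
  | refl => rfl
  | tail _ h ih => subst ih; cases h

theorem rightDepth_le_size (T : BinTree) : rightDepth T ≤ T.size := by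
  induction T with
  | leaf => simp [rightDepth, BinTree.size]
  | node l r ihl ihr => simp [rightDepth, BinTree.size]; omega

/-! ### The push operation -/

/-- Insert `r` at depth `d` along the rightmost branch of `l`. -/
def push : BinTree → BinTree → ℕ → BinTree
  | l, r, 0 => node l r
  | BinTree.leaf, r, _ + 1 => node BinTree.leaf r
  | node a b, r, d + 1 => node a (push b r d)

@[simp] theorem push_zero (l r : BinTree) : push l r 0 = node l r := by
  cases l <;> rfl

theorem size_push (l r : BinTree) (d : ℕ) : (push l r d).size = l.size + r.size + 1 := by
  induction d generalizing l with
  | zero => rw [push_zero]; rfl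
  | succ e ih =>
    cases l with
    | leaf => simp [push, BinTree.size]
    | node a b => simp [push, BinTree.size, ih]; omega

theorem rightDepth_push {l : BinTree} (r : BinTree) {d : ℕ} (hd : d ≤ rightDepth l) :
    rightDepth (push l r d) = d + 1 + rightDepth r := by
  induction d generalizing l with
  | zero => rw [push_zero]; simp [rightDepth]; omega
  | succ e ih =>
    cases l with
    | leaf => simp [rightDepth] at hd
    | node a b =>
      simp only [rightDepth] at hd
      simp [push, rightDepth, ih (by omega : e ≤ rightDepth b)]
      omega

theorem tamari_push {l : BinTree} (r : BinTree) {d : ℕ} (hd : d ≤ rightDepth l) :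
    tamariLE (node l r) (push l r d) := by
  induction d generalizing l with
  | zero => rw [push_zero]; exact tamari_refl _
  | succ e ih =>
    cases l with
    | leaf => simp [rightDepth] at hd
    | node a b =>
      simp only [rightDepth] at hd
      exact Relation.ReflTransGen.head (Rot.base a b r)
        (tamari_node_right a (ih (by omega : e ≤ rightDepth b)))

theorem push_inj : ∀ {l₁ r₁ : BinTree} {d₁ : ℕ} {l₂ r₂ : BinTree} {d₂ : ℕ},
    d₁ ≤ rightDepth l₁ → d₂ ≤ rightDepth l₂ → r₁.size = r₂.size →
    push l₁ r₁ d₁ = push l₂ r₂ d₂ → l₁ = l₂ ∧ r₁ = r₂ ∧ d₁ = d₂ := by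
  intro l₁ r₁ d₁ l₂ r₂ d₂ h₁ h₂ hs he
  induction d₁ generalizing l₁ l₂ d₂ with
  | zero =>
    cases d₂ with
    | zero => rw [push_zero, push_zero] at he; cases he; exact ⟨rfl, rfl, rfl⟩
    | succ e =>
      exfalso
      cases l₂ with
      | leaf => simp [rightDepth] at h₂
      | node a b =>
        rw [push_zero] at he
        simp only [push] at he
        cases he
        have := size_push b r₂ e
        simp only [rightDepth] at h₂
        omega
  | succ e ih =>
    cases l₁ with
    | leaf => simp [rightDepth] at h₁
    | node a b =>
      cases d₂ with
      | zero =>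
        exfalso
        rw [push_zero] at he
        simp only [push] at he
        cases he
        have := size_push b r₁ e
        omega
      | succ e₂ =>
        cases l₂ with
        | leaf => simp [rightDepth] at h₂
        | node a₂ b₂ =>
          simp only [push, BinTree.node.injEq] at he
          obtain ⟨rfl, he⟩ := he
          simp only [rightDepth] at h₁ h₂
          obtain ⟨rfl, rfl, rfl⟩ := ih (by omega) (by omega) he
          exact ⟨rfl, rfl, rfl⟩

theorem rot_push {l r : BinTree} {d : ℕ} (hd : d ≤ rightDepth l) {T₂ : BinTree}
    (h : Rot (push l r d) T₂) :
    ∃ l₂ r₂ d₂, d₂ ≤ rightDepth l₂ ∧ T₂ = push l₂ r₂ d₂ ∧ tamariLE l l₂ ∧ tamariLE r r₂ := by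
  induction d generalizing l r T₂ with
  | zero =>
    rw [push_zero] at h
    cases h with
    | base A B C =>
      refine ⟨node A B, r, 1, ?_, by simp [push], tamari_refl _, tamari_refl _⟩
      simp [rightDepth]
    | left r h => exact ⟨_, r, 0, Nat.zero_le _, (push_zero _ _).symm,
        Relation.ReflTransGen.single h, tamari_refl _⟩
    | right l h => exact ⟨l, _, 0, Nat.zero_le _, (push_zero _ _).symm,
        tamari_refl _, Relation.ReflTransGen.single h⟩
  | succ e ih =>
    cases l with
    | leaf => simp [rightDepth] at hd
    | node a b =>
      simp only [rightDepth] at hd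
      simp only [push] at h
      cases h with
      | base A B C =>
        -- a = node A B, C = push b r e, T₂ = node A (node B (push b r e))
        refine ⟨node A (node B b), r, e + 2, ?_, rfl, Relation.ReflTransGen.single (Rot.base A B b), tamari_refl _⟩
        simp [rightDepth]; omega
      | left _ h =>
        rename_i a'
        exact ⟨node a' b, r, e + 1, by simpa [rightDepth] using hd, rfl,
          Relation.ReflTransGen.single (Rot.left b h), tamari_refl _⟩
      | right _ h =>
        obtain ⟨b₂, r₂, d₂, hd₂, rfl, hb₂, hr₂⟩ := ih (by omega) h
        exact ⟨node a b₂, r₂, d₂ + 1, by simpa [rightDepth] using hd₂, rfl,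
          tamari_node_right a hb₂, hr₂⟩

theorem tamari_node_decomp {l r T' : BinTree} (h : tamariLE (node l r) T') :
    ∃ l₂ r₂ d₂, d₂ ≤ rightDepth l₂ ∧ T' = push l₂ r₂ d₂ ∧ tamariLE l l₂ ∧ tamariLE r r₂ := by
  induction h with
  | refl => exact ⟨l, r, 0, Nat.zero_le _, (push_zero l r).symm, tamari_refl _, tamari_refl _⟩
  | tail _ h ih =>
    obtain ⟨l₁, r₁, d₁, hd₁, rfl, hl₁, hr₁⟩ := ih
    obtain ⟨l₂, r₂, d₂, hd₂, rfl, hl₂, hr₂⟩ := rot_push hd₁ h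
    exact ⟨l₂, r₂, d₂, hd₂, rfl, tamari_trans hl₁ hl₂, tamari_trans hr₁ hr₂⟩

/-! ### Finiteness of upper sets -/

theorem up_finite (T : BinTree) : {T' | tamariLE T T'}.Finite := by
  induction T with
  | leaf =>
    exact Set.Finite.subset (Set.finite_singleton BinTree.leaf)
      (fun T' h => tamari_leaf h)
  | node l r ihl ihr =>
    apply Set.Finite.subset
      (Set.Finite.image (fun x : (BinTree × BinTree) × ℕ => push x.1.1 x.1.2 x.2)
        (Set.Finite.prod (Set.Finite.prod ihl ihr) (Set.finite_Iic l.size)))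
    rintro T' hT'
    obtain ⟨l₂, r₂, d₂, hd₂, rfl, hl₂, hr₂⟩ := tamari_node_decomp hT'
    exact ⟨((l₂, r₂), d₂), ⟨⟨hl₂, hr₂⟩,
      le_trans hd₂ (le_trans (rightDepth_le_size l₂) (le_of_eq (size_tamari hl₂)))⟩, rfl⟩

noncomputable def upF (T : BinTree) : Finset BinTree := (up_finite T).toFinset

theorem mem_upF {T T' : BinTree} : T' ∈ upF T ↔ tamariLE T T' := by
  simp [upF]

/-- The counting polynomial. -/
noncomputable def P (T : BinTree) : Polynomial ℤ :=
  ∑ T' ∈ upF T, Polynomial.X ^ rightDepth T'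

theorem upF_node (l r : BinTree) :
    upF (node l r) = Finset.image (fun x : (BinTree × BinTree) × ℕ => push x.1.1 x.1.2 x.2)
      (((upF l ×ˢ upF r) ×ˢ Finset.range (l.size + 1)).filter
        fun x => x.2 ≤ rightDepth x.1.1) := by
  ext T'
  simp only [mem_upF, Finset.mem_image, Finset.mem_filter, Finset.mem_product,
    Finset.mem_range, mem_upF]
  constructor
  · intro h
    obtain ⟨l₂, r₂, d₂, hd₂, rfl, hl₂, hr₂⟩ := tamari_node_decomp h
    refine ⟨((l₂, r₂), d₂), ⟨⟨⟨hl₂, hr₂⟩, ?_⟩, hd₂⟩, rfl⟩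
    have := rightDepth_le_size l₂
    have := size_tamari hl₂
    omega
  · rintro ⟨⟨⟨l₂, r₂⟩, d₂⟩, ⟨⟨⟨hl₂, hr₂⟩, -⟩, hd₂⟩, rfl⟩
    exact tamari_trans (tamari_node hl₂ hr₂) (tamari_push r₂ hd₂)

theorem polyDelta_spec (g : Polynomial ℤ) :
    (Polynomial.X - Polynomial.C 1) * polyDelta g =
      Polynomial.X * g - Polynomial.C (g.eval 1) := by
  have hm : (Polynomial.X - Polynomial.C (1 : ℤ)).Monic := Polynomial.monic_X_sub_C 1
  have h := Polynomial.modByMonic_add_div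
    (Polynomial.X * g - Polynomial.C (g.eval 1)) (Polynomial.X - Polynomial.C 1)
  rw [Polynomial.modByMonic_X_sub_C_eq_C_eval] at h
  simp only [Polynomial.eval_sub, Polynomial.eval_mul, Polynomial.eval_X,
    Polynomial.eval_C, one_mul, sub_self, map_zero, zero_add] at h
  exact h

theorem P_node_sum (l r : BinTree) :
    P (node l r) = ∑ a ∈ upF l, ∑ b ∈ upF r,
      ∑ d ∈ Finset.range (rightDepth a + 1),
        (Polynomial.X : Polynomial ℤ) ^ (d + 1 + rightDepth b) := by
  rw [P, upF_node, Finset.sum_image]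
  · rw [Finset.sum_filter, Finset.sum_product, Finset.sum_product]
    refine Finset.sum_congr rfl fun a ha => Finset.sum_congr rfl fun b hb => ?_
    rw [← Finset.sum_filter]
    have hsz : rightDepth a ≤ l.size := by
      have := rightDepth_le_size a
      have := size_tamari (mem_upF.mp ha)
      omega
    have hfr : (Finset.range (l.size + 1)).filter (fun d => d ≤ rightDepth a)
        = Finset.range (rightDepth a + 1) := by
      ext d
      simp only [Finset.mem_filter, Finset.mem_range]
      omega
    rw [hfr]
    refine Finset.sum_congr rfl fun d hd => ?_
    rw [rightDepth_push b (by simpa [Nat.lt_succ_iff] using hd)]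
  · rintro ⟨⟨l₁, r₁⟩, d₁⟩ h₁ ⟨⟨l₂, r₂⟩, d₂⟩ h₂ he
    simp only [Finset.mem_coe, Finset.mem_filter, Finset.mem_product, mem_upF] at h₁ h₂
    obtain ⟨rfl, rfl, rfl⟩ := push_inj h₁.2 h₂.2
      (by rw [size_tamari h₁.1.1.2, size_tamari h₂.1.1.2]) he
    rfl

theorem eval_one_P (T : BinTree) : (P T).eval 1 = ((upF T).card : ℤ) := by
  simp [P, Polynomial.eval_finset_sum]

theorem polyDelta_P (l : BinTree) :
    polyDelta (P l) = ∑ a ∈ upF l, ∑ d ∈ Finset.range (rightDepth a + 1),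
      (Polynomial.X : Polynomial ℤ) ^ d := by
  have hne : (Polynomial.X - Polynomial.C (1 : ℤ)) ≠ 0 := Polynomial.X_sub_C_ne_zero 1
  apply mul_left_cancel₀ hne
  rw [polyDelta_spec]
  rw [Finset.mul_sum]
  have : ∀ a ∈ upF l, (Polynomial.X - Polynomial.C (1 : ℤ)) *
      ∑ d ∈ Finset.range (rightDepth a + 1), (Polynomial.X : Polynomial ℤ) ^ d
      = Polynomial.X ^ (rightDepth a + 1) - 1 := by
    intro a _
    rw [mul_comm, Polynomial.C_1, geom_sum_mul]
  rw [Finset.sum_congr rfl this, Finset.sum_sub_distrib]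
  rw [eval_one_P]
  have h1 : ∀ a ∈ upF l, Polynomial.X ^ (rightDepth a + 1)
      = (Polynomial.X : Polynomial ℤ) * Polynomial.X ^ rightDepth a := fun a _ => by
    rw [pow_succ']
  rw [Finset.sum_congr rfl h1, ← Finset.mul_sum, ← P]
  congr 1
  simp

theorem P_eq_BTt (T : BinTree) : BTt T = P T := by
  induction T with
  | leaf =>
    have : upF BinTree.leaf = {BinTree.leaf} := by
      ext T'
      simp only [mem_upF, Finset.mem_singleton]
      exact ⟨tamari_leaf, fun h => h ▸ tamari_refl _⟩
    simp [BTt, P, this, rightDepth]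
  | node l r ihl ihr =>
    rw [show BTt (node l r) = Polynomial.X * BTt r * polyDelta (BTt l) from rfl,
      ihl, ihr, P_node_sum, polyDelta_P]
    rw [Finset.mul_sum]
    refine Finset.sum_congr rfl fun a _ => ?_
    conv_rhs => rw [Finset.sum_comm]
    rw [Finset.mul_sum]
    refine Finset.sum_congr rfl fun d _ => ?_
    rw [P, Finset.mul_sum, Finset.sum_mul]
    refine Finset.sum_congr rfl fun b _ => ?_
    rw [pow_add, pow_add, pow_one]
    ring

end TamariProof
/-- The coefficient of `x^k` in `B̃_T` counts the trees `T' ≥ T` whose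
rightmost branch has exactly `k` nodes; `B̃_T(1)` counts all trees `T' ≥ T`. -/
theorem stmt12 (n : ℕ) (T : BinTree) (hT : T.size = n) (k : ℕ) :
    (BTt T).coeff k =
      (({T' : BinTree | tamariLE T T' ∧ rightDepth T' = k}).ncard : ℤ) ∧
    (BTt T).eval 1 = (({T' : BinTree | tamariLE T T'}).ncard : ℤ) := by
  constructor
  · have hset : {T' : BinTree | tamariLE T T' ∧ rightDepth T' = k}
        = ↑((TamariProof.upF T).filter fun T' => k = rightDepth T') := by
      ext T'
      simp only [Set.mem_setOf_eq, Finset.coe_filter, TamariProof.mem_upF, eq_comm]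
    rw [hset, Set.ncard_coe_finset, TamariProof.P_eq_BTt, TamariProof.P,
      Polynomial.finset_sum_coeff]
    simp only [Polynomial.coeff_X_pow]
    rw [← Finset.sum_filter, Finset.sum_const, nsmul_eq_mul, mul_one]
  · have hset : {T' : BinTree | tamariLE T T'} = ↑(TamariProof.upF T) := by
      ext T'
      simp only [Set.mem_setOf_eq, Finset.mem_coe, TamariProof.mem_upF]
    rw [hset, Set.ncard_coe_finset, TamariProof.P_eq_BTt, TamariProof.eval_one_P]
end

section
/- Fix m, n ≥ 1 and let T be a binary tree of size nm. The following are equivalent: (1) T is an m-binary tree; (2) the binary search tree labelling of T satisfies im ⊴_T im−1 ⊴_T ⋯ ⊴_T (i−1)m+1 for all 1 ≤ i ≤ n; (3) T is greater than or equal to the (n,m)-comb in the Tamari order. In particular, the upper ideal of the Tamari order on binary trees of size nm generated by the (n,m)-comb is exactly the set of m-binary trees of size nm. -/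
/-- Graft the tree `B` at the leftmost leaf of `S` (as left child of the
leftmost node of `S`; if `S` is empty the result is `B`). -/
def graftL : BinTree → BinTree → BinTree
  | BinTree.leaf, B => B
  | BinTree.node l r, B => BinTree.node (graftL l B) r

/-- Auxiliary construction: from `[T_{R_i}, …, T_{R_m}]`, the subtree rooted at
the `i`-th new node `x` (empty left child, right subtree `T_{R_i}` with the
next new node grafted at its leftmost leaf). -/
def buildAux : List BinTree → BinTree
  | [] => BinTree.leaf
  | S :: rest => BinTree.node BinTree.leaf (graftL S (buildAux rest))

/-- The right subtree of the root of an `m`-binary tree built from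
`[T_{R_1}, …, T_{R_m}]`: it is `T_{R_1}` with, grafted at its leftmost leaf, a
new node carrying `T_{R_2}` (with, grafted at the leftmost leaf of `T_{R_2}`, a
new node carrying `T_{R_3}`, and so on). -/
def buildRight : List BinTree → BinTree
  | [] => BinTree.leaf
  | S :: rest => graftL S (buildAux rest)

/-- `m`-binary trees, defined recursively: the empty tree, or a root whose left
subtree is an `m`-binary tree `T_L` and whose right subtree is built from a
list `[T_{R_1}, …, T_{R_m}]` of `m`-binary trees by the grafting procedure. -/
inductive IsMBinary (m : ℕ) : BinTree → Prop
  | leaf : IsMBinary m BinTree.leaf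
  | node (TL : BinTree) (TRs : List BinTree) :
      TRs.length = m → IsMBinary m TL → (∀ S ∈ TRs, IsMBinary m S) →
      IsMBinary m (BinTree.node TL (buildRight TRs))

/-- A chain of `k` nodes linked by right edges. -/
def rightChain : ℕ → BinTree
  | 0 => BinTree.leaf
  | k + 1 => BinTree.node BinTree.leaf (rightChain k)

/-- The `(n,m)`-comb: `n` nodes on the leftmost branch, each carrying as right
subtree a chain of `m − 1` nodes linked by right edges. -/
def comb (m : ℕ) : ℕ → BinTree
  | 0 => BinTree.leaf
  | n + 1 => BinTree.node (comb m n) (rightChain (m - 1))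

/-- The condition `i·m ⊴_T i·m−1 ⊴_T ⋯ ⊴_T (i−1)·m+1` for all `1 ≤ i ≤ n`,
stated on consecutive labels. -/
def mCond (m n : ℕ) (T : BinTree) : Prop :=
  ∀ i j, 1 ≤ i → i ≤ n → 1 ≤ j → j < m → T.sub 0 (i * m - j + 1) (i * m - j)

namespace BinTree

lemma sub_bounds : ∀ (T : BinTree) (o a b : ℕ), T.sub o a b →
    o < a ∧ a ≤ o + T.size ∧ o < b ∧ b ≤ o + T.size := by
  intro T
  induction T with
  | leaf => intro o a b h; exact absurd h (by simp [sub])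
  | node l r ihl ihr =>
    intro o a b h
    rcases h with ⟨hb, h1, h2⟩ | h | h
    · simp only [size]; omega
    · have := ihl o a b h; simp only [size]; omega
    · have := ihr (o + l.size + 1) a b h; simp only [size]; omega

lemma rot_size : ∀ {T T' : BinTree}, Rot T T' → T'.size = T.size := by
  intro T T' h
  induction h with
  | base A B C => simp only [size]; omega
  | left r _ ih => simp only [size, ih]
  | right l _ ih => simp only [size, ih]

lemma sub_node_left {L R : BinTree} {o a b : ℕ} (h : L.sub o a b) :
    (node L R).sub o a b := Or.inr (Or.inl h)

lemma sub_node_right {L R : BinTree} {o a b : ℕ} (h : R.sub (o + L.size + 1) a b) :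
    (node L R).sub o a b := Or.inr (Or.inr h)

lemma sub_node_elim_left {L R : BinTree} {o a b : ℕ}
    (h : (node L R).sub o a b) (hb : b ≤ o + L.size) : L.sub o a b := by
  rcases h with ⟨hb', _, _⟩ | h | h
  · omega
  · exact h
  · have := sub_bounds R _ a b h; omega

lemma sub_node_elim_right {L R : BinTree} {o a b : ℕ}
    (h : (node L R).sub o a b) (hb : o + L.size + 1 < b) : R.sub (o + L.size + 1) a b := by
  rcases h with ⟨hb', _, _⟩ | h | h
  · omega
  · have := sub_bounds L _ a b h; omega
  · exact h

lemma rot_sub_gt : ∀ {T T' : BinTree}, Rot T T' → ∀ o a b, b < a → T.sub o a b → T'.sub o a b := by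
  intro T T' h
  induction h with
  | base A B C =>
    intro o a b hba h
    rcases h with ⟨hb, h1, h2⟩ | (⟨hb, h1, h2⟩ | h | h) | h
    · -- y-root case: goes to root of node B C
      refine Or.inr (Or.inr (Or.inl ?_))
      simp only [size] at hb h2 ⊢
      omega
    · -- x-root case: new root
      refine Or.inl ?_
      simp only [size] at hb h2 ⊢
      omega
    · exact Or.inr (Or.inl h)
    · exact Or.inr (Or.inr (Or.inr (Or.inl h)))
    · refine Or.inr (Or.inr (Or.inr (Or.inr ?_)))
      have e : o + (node A B).size + 1 = o + A.size + 1 + B.size + 1 := by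
        simp only [size]; omega
      rw [e] at h; exact h
  | @left l l' r hrot ih =>
    intro o a b hba h
    have hs : l'.size = l.size := rot_size hrot
    rcases h with ⟨hb, h1, h2⟩ | h | h
    · exact Or.inl ⟨by omega, by omega, by omega⟩
    · exact Or.inr (Or.inl (ih o a b hba h))
    · refine Or.inr (Or.inr ?_); rw [hs]; exact h
  | @right l r r' hrot ih =>
    intro o a b hba h
    rcases h with ⟨hb, h1, h2⟩ | h | h
    · have hs : r'.size = r.size := rot_size hrot
      exact Or.inl ⟨hb, h1, by omega⟩
    · exact Or.inr (Or.inl h)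
    · exact Or.inr (Or.inr (ih _ a b hba h))

end BinTree
namespace BinTree

lemma graftL_leaf : ∀ T : BinTree, graftL T leaf = T := by
  intro T
  induction T with
  | leaf => rfl
  | node l r ihl ihr => simp [graftL, ihl]

lemma graftL_size : ∀ (T X : BinTree), (graftL T X).size = T.size + X.size := by
  intro T X
  induction T with
  | leaf => simp [graftL, size]
  | node l r ihl ihr => simp only [graftL, size, ihl]; omega

lemma sub_graftL_left : ∀ (T X : BinTree) (q a b : ℕ),
    T.sub (q + X.size) a b → (graftL T X).sub q a b := by
  intro T
  induction T with
  | leaf => intro X q a b h; exact absurd h (by simp [sub])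
  | node l r ihl ihr =>
    intro X q a b h
    rcases h with ⟨hb, h1, h2⟩ | h | h
    · refine Or.inl ?_
      rw [graftL_size]
      omega
    · exact Or.inr (Or.inl (ihl X q a b h))
    · refine Or.inr (Or.inr ?_)
      have e : q + (graftL l X).size + 1 = q + X.size + l.size + 1 := by
        rw [graftL_size]; omega
      rw [e]; exact h

lemma sub_graftL_right : ∀ (T X : BinTree) (q a b : ℕ),
    X.sub q a b → (graftL T X).sub q a b := by
  intro T
  induction T with
  | leaf => intro X q a b h; exact h
  | node l r ihl ihr =>
    intro X q a b h
    exact Or.inr (Or.inl (ihl X q a b h))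

lemma sub_graftL_elim_lo : ∀ (T X : BinTree) (q a b : ℕ),
    (graftL T X).sub q a b → b ≤ q + X.size → X.sub q a b := by
  intro T
  induction T with
  | leaf => intro X q a b h _; exact h
  | node l r ihl ihr =>
    intro X q a b h hb
    rcases h with ⟨hb', h1, h2⟩ | h | h
    · rw [graftL_size] at hb'; omega
    · exact ihl X q a b h hb
    · have := sub_bounds r _ a b h
      rw [graftL_size] at this; omega

lemma sub_graftL_elim_hi : ∀ (T X : BinTree) (q a b : ℕ),
    (graftL T X).sub q a b → q + X.size < a → q + X.size < b → T.sub (q + X.size) a b := by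
  intro T
  induction T with
  | leaf =>
    intro X q a b h ha hb
    have := sub_bounds X q a b h; omega
  | node l r ihl ihr =>
    intro X q a b h ha hb
    rcases h with ⟨hb', h1, h2⟩ | h | h
    · refine Or.inl ?_
      rw [graftL_size] at hb'
      rw [graftL_size] at h2
      omega
    · exact Or.inr (Or.inl (ihl X q a b h ha hb))
    · refine Or.inr (Or.inr ?_)
      have e : q + (graftL l X).size + 1 = q + X.size + l.size + 1 := by
        rw [graftL_size]; omega
      rw [e] at h; exact h

/-- The subtree stripped of the subtree rooted at its leftmost node. -/
def stripL : BinTree → BinTree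
  | leaf => leaf
  | node leaf _ => leaf
  | node (node a b) r => node (stripL (node a b)) r

/-- Right subtree of the leftmost node. -/
def lrest : BinTree → BinTree
  | leaf => leaf
  | node leaf b => b
  | node (node a b) _ => lrest (node a b)

lemma graft_strip : ∀ R : BinTree, R ≠ leaf →
    graftL (stripL R) (node leaf (lrest R)) = R := by
  intro R
  induction R with
  | leaf => intro h; exact absurd rfl h
  | node l r ihl ihr =>
    intro _
    cases l with
    | leaf => rfl
    | node a b =>
      simp only [stripL, lrest, graftL]
      rw [ihl (by simp)]

lemma buildAux_nonempty : ∀ (L : List BinTree), L ≠ [] →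
    buildAux L = node leaf (buildRight L) := by
  intro L hL
  cases L with
  | nil => exact absurd rfl hL
  | cons S rest => rfl

lemma buildAux_size : ∀ L : List BinTree,
    (buildAux L).size = (L.map size).sum + L.length := by
  intro L
  induction L with
  | nil => simp [buildAux, size]
  | cons S rest ih =>
    simp only [buildAux, size, graftL_size, ih, List.map_cons, List.sum_cons, List.length_cons]
    omega

lemma buildRight_size : ∀ (S : BinTree) (rest : List BinTree),
    (buildRight (S :: rest)).size = ((S :: rest).map size).sum + rest.length := by
  intro S rest
  simp only [buildRight, graftL_size, buildAux_size, List.map_cons, List.sum_cons]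
  omega

lemma rightChain_size : ∀ k, (rightChain k).size = k := by
  intro k
  induction k with
  | zero => rfl
  | succ k ih => simp [rightChain, size, ih]

lemma comb_size (m : ℕ) (hm : 1 ≤ m) : ∀ n, (comb m n).size = n * m := by
  intro n
  induction n with
  | zero => simp [comb, size]
  | succ n ih =>
    simp only [comb, size, ih, rightChain_size]
    have : m - 1 + 1 = m := by omega
    rw [Nat.succ_mul]; omega

lemma buildAux_replicate : ∀ k, buildAux (List.replicate k leaf) = rightChain k := by
  intro k
  induction k with
  | zero => rfl
  | succ k ih => simp [List.replicate, buildAux, graftL, ih, rightChain]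

end BinTree
/-- Internal chain condition: every label `b` (not a multiple of `m`) with
`b+1` also a label has `b+1` in its subtree. -/
def goodIn (m : ℕ) (S : BinTree) (o : ℕ) : Prop :=
  ∀ b, o + 1 ≤ b → b + 1 ≤ o + S.size → ¬ (m ∣ b) → S.sub o (b + 1) b

open BinTree

theorem goodIn_isMBinary_aux (m : ℕ) (hm : 1 ≤ m) : ∀ N : ℕ,
    (∀ S o, 2 * S.size ≤ N → m ∣ o → m ∣ (o + S.size) → goodIn m S o → IsMBinary m S) ∧
    (∀ k R q, 2 * R.size + 1 ≤ N → k < m → m ∣ (q + k) → m ∣ (q + R.size) → goodIn m R q →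
      ∃ Ts : List BinTree, Ts.length = k + 1 ∧ buildRight Ts = R ∧ ∀ S ∈ Ts, IsMBinary m S) := by
  intro N
  induction N using Nat.strong_induction_on with
  | _ N IH =>
  constructor
  · -- part A
    intro S o hN ho hos hg
    cases S with
    | leaf => exact IsMBinary.leaf
    | node L R =>
      have hsz : (node L R).size = L.size + R.size + 1 := rfl
      rw [hsz] at hN hos
      -- m ∣ o + L.size
      have hol : m ∣ o + L.size := by
        rcases Nat.eq_zero_or_pos L.size with h0 | hpos
        · rw [h0]; simpa using ho
        · by_contra hnd
          have hsub := hg (o + L.size) (by omega) (by rw [hsz]; omega) hnd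
          have hL := sub_node_elim_left hsub (le_refl _)
          have := sub_bounds L o _ _ hL
          omega
      -- L is m-binary
      have hgL : goodIn m L o := by
        intro b hb1 hb2 hbm
        have hsub := hg b hb1 (by rw [hsz]; omega) hbm
        exact sub_node_elim_left hsub (by omega)
      have hLmb : IsMBinary m L :=
        ((IH (2 * L.size) (by omega)).1) L o le_rfl ho hol hgL
      -- R decomposes
      have hgR : goodIn m R (o + L.size + 1) := by
        intro b hb1 hb2 hbm
        have hsub := hg b (by omega) (by rw [hsz]; omega) hbm
        exact sub_node_elim_right hsub (by omega)
      obtain ⟨Ts, hlen, hbuild, hmb⟩ :=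
        ((IH (2 * R.size + 1) (by omega)).2) (m - 1) R (o + L.size + 1) le_rfl
          (by omega)
          (by have : o + L.size + 1 + (m - 1) = (o + L.size) + m := by omega
              rw [this]; exact Dvd.dvd.add hol (dvd_refl m))
          (by have : o + L.size + 1 + R.size = o + (L.size + R.size + 1) := by omega
              rw [this]; exact hos)
          hgR
      have hlen' : Ts.length = m := by omega
      rw [← hbuild]
      exact IsMBinary.node L Ts hlen' hLmb hmb
  · -- part B
    intro k R q hN hk hqk hqR hg
    cases R with
    | leaf =>
      have hk0 : k = 0 := by
        simp only [size, Nat.add_zero] at hqR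
        have hdk := Nat.dvd_sub hqk hqR
        simp only [Nat.add_sub_cancel_left] at hdk
        exact Nat.eq_zero_of_dvd_of_lt hdk hk
      subst hk0
      exact ⟨[leaf], rfl, rfl, by intro S hS; simp at hS; subst hS; exact IsMBinary.leaf⟩
    | node A B =>
      set R : BinTree := node A B with hR
      have hRne : R ≠ leaf := by simp [hR]
      have hRpos : 1 ≤ R.size := by rw [hR]; simp only [size]; omega
      cases k with
      | zero =>
        refine ⟨[R], rfl, ?_, ?_⟩
        · show graftL R (buildAux []) = R
          exact graftL_leaf R
        · intro S hS; simp at hS; subst hS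
          refine ((IH (2 * R.size) (by omega)).1) R q le_rfl (by simpa using hqk) hqR hg
      | succ k' =>
        -- peel off the leftmost node
        set T1 := stripL R with hT1
        set R' := lrest R with hR'
        set X : BinTree := node leaf R' with hX
        have hgraft : graftL T1 X = R := graft_strip R hRne
        have hXsize : X.size = R'.size + 1 := by simp [hX, size]
        set s := R'.size + 1 with hs
        have hsizes : T1.size + s = R.size := by
          have := graftL_size T1 X
          rw [hgraft, hXsize] at this; omega
        have hs_le : s ≤ R.size := by omega
        -- m ∣ q + s
        have hqs : m ∣ q + s := by
          rcases Nat.lt_or_ge s R.size with hlt | hge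
          · by_contra hnd
            have hsub := hg (q + s) (by omega) (by omega) hnd
            rw [← hgraft] at hsub
            have hXsub := sub_graftL_elim_lo T1 X q _ _ hsub (by omega)
            have := sub_bounds X q _ _ hXsub
            omega
          · have : s = R.size := by omega
            rw [this]; exact hqR
        -- T1 is m-binary
        have hgT1 : goodIn m T1 (q + s) := by
          intro b hb1 hb2 hbm
          have hsub := hg b (by omega) (by omega) hbm
          rw [← hgraft] at hsub
          have := sub_graftL_elim_hi T1 X q _ _ hsub (by omega) (by omega)
          rwa [hXsize] at this
        have hT1mb : IsMBinary m T1 :=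
          ((IH (2 * T1.size) (by omega)).1) T1 (q + s) le_rfl hqs
            (by have : q + s + T1.size = q + R.size := by omega
                rw [this]; exact hqR) hgT1
        -- recurse on R'
        have hgR' : goodIn m R' (q + 1) := by
          intro b hb1 hb2 hbm
          have hsub := hg b (by omega) (by omega) hbm
          rw [← hgraft] at hsub
          have hXsub := sub_graftL_elim_lo T1 X q _ _ hsub (by omega)
          rcases hXsub with ⟨hb', _, _⟩ | hf | hs'
          · simp only [size] at hb'; omega
          · exact absurd hf (by simp [sub])
          · simpa [size] using hs'
        obtain ⟨Ts', hlen', hbuild', hmb'⟩ :=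
          ((IH (2 * R'.size + 1) (by omega)).2) k' R' (q + 1) le_rfl (by omega)
            (by have : q + 1 + k' = q + (k' + 1) := by omega
                rw [this]; exact hqk)
            (by have : q + 1 + R'.size = q + s := by omega
                rw [this]; exact hqs) hgR'
        refine ⟨T1 :: Ts', by simp [hlen'], ?_, ?_⟩
        · show graftL T1 (buildAux Ts') = R
          rw [buildAux_nonempty Ts' (by intro h; rw [h] at hlen'; simp at hlen'), hbuild']
          exact hgraft
        · intro S hS
          rcases List.mem_cons.mp hS with h | h
          · subst h; exact hT1mb
          · exact hmb' S h
lemma isMBinary_dvd_size (m : ℕ) (hm : 1 ≤ m) : ∀ {T : BinTree}, IsMBinary m T → m ∣ T.size := by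
  intro T h
  induction h with
  | leaf => simp [BinTree.size]
  | node TL TRs hlen hTL hTRs ihTL ihTRs =>
    cases TRs with
    | nil => simp at hlen; omega
    | cons S rest =>
      have hsum : m ∣ ((S :: rest).map BinTree.size).sum := by
        apply List.dvd_sum
        intro x hx
        simp only [List.mem_map] at hx
        obtain ⟨y, hy, rfl⟩ := hx
        exact ihTRs y hy
      have hbsz := buildRight_size S rest
      have hlen2 : rest.length = m - 1 := by simp only [List.length_cons] at hlen; omega
      have : (BinTree.node TL (buildRight (S :: rest))).size
          = TL.size + (((S :: rest).map BinTree.size).sum + rest.length) + 1 := by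
        simp only [BinTree.size, hbsz]
      rw [this, hlen2]
      have e : TL.size + (((S :: rest).map BinTree.size).sum + (m - 1)) + 1
          = TL.size + ((S :: rest).map BinTree.size).sum + m := by omega
      rw [e]
      exact Dvd.dvd.add (Dvd.dvd.add ihTL hsum) (dvd_refl m)

open BinTree in
lemma goodIn_buildRight (m : ℕ) (hm : 1 ≤ m) :
    ∀ (Ts : List BinTree), Ts ≠ [] →
    (∀ T ∈ Ts, m ∣ T.size ∧ ∀ o, m ∣ o → goodIn m T o) →
    ∀ q, m ∣ (q + (Ts.length - 1)) → goodIn m (buildRight Ts) q := by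
  intro Ts
  induction Ts with
  | nil => intro h; exact absurd rfl h
  | cons T rest ih =>
    intro _ hpieces q hq b hb1 hb2 hbm
    obtain ⟨hTdvd, hTgood⟩ := hpieces T (by simp)
    cases rest with
    | nil =>
      -- buildRight [T] = T
      have hb' : buildRight [T] = T := graftL_leaf T
      rw [hb'] at hb2 ⊢
      simp only [List.length_cons, List.length_nil] at hq
      exact hTgood q (by simpa using hq) b hb1 hb2 hbm
    | cons U rest' =>
      set rest := U :: rest' with hrest
      set R' : BinTree := buildRight rest with hR'
      set X : BinTree := node leaf R' with hX
      have hXb : buildAux rest = X := buildAux_nonempty rest (by simp [hrest])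
      have hbr : buildRight (T :: rest) = graftL T X := by
        show graftL T (buildAux rest) = graftL T X
        rw [hXb]
      have hXsize : X.size = R'.size + 1 := by simp [hX, size]
      set s := R'.size + 1 with hs
      have hRsz : (buildRight (T :: rest)).size = T.size + s := by
        rw [hbr, graftL_size]; omega
      -- divisibility of q + s
      have hsumrest : m ∣ (rest.map size).sum := by
        apply List.dvd_sum
        intro x hx
        simp only [List.mem_map] at hx
        obtain ⟨y, hy, rfl⟩ := hx
        exact (hpieces y (List.mem_cons_of_mem T hy)).1
      have hR'sz : R'.size = (rest.map size).sum + rest'.length := by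
        rw [hR', hrest]; exact buildRight_size U rest'
      have hlenq : m ∣ q + rest.length := by
        simpa [hrest] using hq
      have hqs : m ∣ q + s := by
        have e : q + s = (q + rest.length) + (rest.map size).sum := by
          simp [hrest] at hR'sz ⊢; omega
        rw [e]; exact Dvd.dvd.add hlenq hsumrest
      rw [hbr]
      rw [hRsz] at hb2
      rcases Nat.lt_trichotomy b (q + s) with hlt | heq | hgt
      · -- b within X
        rcases Nat.lt_or_ge b (q + 2) with hb2' | hb2'
        · -- b = q + 1 : root of X
          have hbq : b = q + 1 := by omega
          apply sub_graftL_right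
          refine Or.inl ?_
          simp only [size]
          constructor
          · omega
          · constructor <;> omega
        · -- b ≥ q+2 : inside R'
          have hsub := ih (by simp [hrest]) (fun T' hT' => hpieces T' (List.mem_cons_of_mem T hT'))
            (q + 1) (by have : q + 1 + (rest.length - 1) = q + rest.length := by
                          simp [hrest]; omega
                        rw [this]; exact hlenq)
            b (by omega) (by omega) hbm
          apply sub_graftL_right
          refine Or.inr (Or.inr ?_)
          simpa [size] using hsub
      · exact absurd (heq ▸ hqs) hbm
      · -- b within T
        have hsub := hTgood (q + s) hqs b (by omega) (by omega) hbm
        have := sub_graftL_left T X q (b + 1) b (by rwa [hXsize])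
        exact this
open BinTree in
lemma isMBinary_goodIn (m : ℕ) (hm : 1 ≤ m) :
    ∀ {T : BinTree}, IsMBinary m T → ∀ o, m ∣ o → goodIn m T o := by
  intro T h
  induction h with
  | leaf =>
    intro o _ b hb1 hb2 _
    simp only [size] at hb2; omega
  | node TL TRs hlen hTL hTRs ihTL ihTRs =>
    intro o ho b hb1 hb2 hbm
    have hld : m ∣ TL.size := isMBinary_dvd_size m hm hTL
    set l := TL.size with hl
    have hsz : (node TL (buildRight TRs)).size = l + (buildRight TRs).size + 1 := rfl
    rcases Nat.lt_trichotomy b (o + l) with hlt | heq | hgt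
    · exact sub_node_left (ihTL o ho b hb1 (by omega) hbm)
    · exact absurd (heq ▸ (Dvd.dvd.add ho hld)) hbm
    · rcases Nat.eq_or_lt_of_le hgt with heq1 | hgt1
      · -- b = o + l + 1 : root
        refine Or.inl ?_
        rw [hsz] at hb2
        exact ⟨heq1.symm, by omega, by omega⟩
      · -- b in the right subtree
        have hne : TRs ≠ [] := by
          intro h; rw [h] at hlen; simp at hlen; omega
        have hgood := goodIn_buildRight m hm TRs hne
          (fun S hS => ⟨isMBinary_dvd_size m hm (hTRs S hS), ihTRs S hS⟩)
          (o + l + 1)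
          (by have e : o + l + 1 + (TRs.length - 1) = (o + l) + m := by rw [hlen]; omega
              rw [e]; exact Dvd.dvd.add (Dvd.dvd.add ho hld) (dvd_refl m))
        rw [hsz] at hb2
        exact sub_node_right (hgood b (by omega) (by omega) hbm)
open BinTree

lemma tamariLE.refl (T : BinTree) : tamariLE T T := Relation.ReflTransGen.refl

lemma tamariLE.trans {a b c : BinTree} (h1 : tamariLE a b) (h2 : tamariLE b c) :
    tamariLE a c := Relation.ReflTransGen.trans h1 h2

lemma tamariLE_node_left {l l' r : BinTree} (h : tamariLE l l') :
    tamariLE (node l r) (node l' r) :=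
  Relation.ReflTransGen.lift (fun x => node x r) (fun _ _ hab => Rot.left r hab) _ _ h

lemma tamariLE_node_right {l r r' : BinTree} (h : tamariLE r r') :
    tamariLE (node l r) (node l r') :=
  Relation.ReflTransGen.lift (fun x => node l x) (fun _ _ hab => Rot.right l hab) _ _ h

lemma tamariLE_node {l l' r r' : BinTree} (hl : tamariLE l l') (hr : tamariLE r r') :
    tamariLE (node l r) (node l' r') :=
  (tamariLE_node_left hl).trans (tamariLE_node_right hr)

lemma rot_graftL_left {T T' : BinTree} (X : BinTree) (h : Rot T T') :
    Rot (graftL T X) (graftL T' X) := by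
  induction h with
  | base A B C =>
    show Rot (node (node (graftL A X) B) C) (node (graftL A X) (node B C))
    exact Rot.base _ _ _
  | left r _ ih => exact Rot.left r ih
  | @right l r r' hr ih => exact Rot.right (graftL l X) hr

lemma rot_graftL_right (T : BinTree) {X X' : BinTree} (h : Rot X X') :
    Rot (graftL T X) (graftL T X') := by
  induction T with
  | leaf => exact h
  | node l r ihl ihr => exact Rot.left r ihl

lemma tamariLE_graftL {T T' X X' : BinTree} (hT : tamariLE T T') (hX : tamariLE X X') :
    tamariLE (graftL T X) (graftL T' X') := by
  exact Relation.ReflTransGen.trans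
    (Relation.ReflTransGen.lift (fun t => graftL t X)
      (fun _ _ hab => rot_graftL_left X hab) _ _ hT)
    (Relation.ReflTransGen.lift (fun x => graftL T' x)
      (fun _ _ hab => rot_graftL_right T' hab) _ _ hX)

-- Lemma H2
lemma tamari_H2 (m : ℕ) : ∀ (a : ℕ) (W : BinTree),
    tamariLE (node (graftL (comb m a) (node leaf W)) (rightChain (m - 1)))
      (graftL (comb m a) (node leaf (node W (rightChain (m - 1))))) := by
  intro a
  induction a with
  | zero =>
    intro W
    show tamariLE (node (node leaf W) (rightChain (m-1))) (node leaf (node W (rightChain (m-1))))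
    exact Relation.ReflTransGen.single (Rot.base _ _ _)
  | succ a ih =>
    intro W
    show tamariLE
      (node (node (graftL (comb m a) (node leaf W)) (rightChain (m-1))) (rightChain (m-1)))
      (node (graftL (comb m a) (node leaf (node W (rightChain (m-1))))) (rightChain (m-1)))
    exact tamariLE_node_left (ih W)

-- Lemma H
lemma tamari_H (m : ℕ) : ∀ (b a : ℕ) (Y : BinTree),
    tamariLE (graftL (comb m (a + b)) (node leaf Y))
      (graftL (comb m a) (node leaf (graftL (comb m b) Y))) := by
  intro b
  induction b with
  | zero => intro a Y; exact tamariLE.refl _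
  | succ b ih =>
    intro a Y
    have step1 : tamariLE (graftL (comb m (a + (b+1))) (node leaf Y))
        (node (graftL (comb m a) (node leaf (graftL (comb m b) Y))) (rightChain (m-1))) := by
      have e : a + (b + 1) = (a + b) + 1 := by omega
      rw [e]
      show tamariLE (node (graftL (comb m (a+b)) (node leaf Y)) (rightChain (m-1))) _
      exact tamariLE_node_left (ih a Y)
    refine step1.trans ?_
    have step2 := tamari_H2 m a (graftL (comb m b) Y)
    have e2 : graftL (comb m (b+1)) Y = node (graftL (comb m b) Y) (rightChain (m-1)) := rfl
    rw [e2]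
    exact step2

-- Lemma F
lemma tamari_F (m : ℕ) : ∀ (j k : ℕ),
    tamariLE (comb m (k + 1 + j))
      (node (comb m k) (graftL (comb m j) (rightChain (m - 1)))) := by
  intro j
  induction j with
  | zero =>
    intro k
    show tamariLE (node (comb m k) (rightChain (m-1))) (node (comb m k) (rightChain (m-1)))
    exact tamariLE.refl _
  | succ j ih =>
    intro k
    have e : k + 1 + (j + 1) = (k + 1 + j) + 1 := by omega
    rw [e]
    have step1 : tamariLE (comb m (k + 1 + j + 1))
        (node (node (comb m k) (graftL (comb m j) (rightChain (m-1)))) (rightChain (m-1))) := by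
      show tamariLE (node (comb m (k+1+j)) (rightChain (m-1))) _
      exact tamariLE_node_left (ih k)
    refine step1.trans ?_
    have step2 : Rot
        (node (node (comb m k) (graftL (comb m j) (rightChain (m-1)))) (rightChain (m-1)))
        (node (comb m k) (node (graftL (comb m j) (rightChain (m-1))) (rightChain (m-1)))) :=
      Rot.base _ _ _
    have e2 : graftL (comb m (j+1)) (rightChain (m-1))
        = node (graftL (comb m j) (rightChain (m-1))) (rightChain (m-1)) := rfl
    rw [e2]
    exact Relation.ReflTransGen.single step2
open BinTree

-- Lemma G
lemma tamari_buildRight (m : ℕ) (hm : 1 ≤ m) :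
    ∀ (Ts : List BinTree), Ts ≠ [] →
    (∀ T ∈ Ts, ∃ nT, nT * m = T.size ∧ tamariLE (comb m nT) T) →
    ∀ σ, σ * m = ((Ts.map size).sum) →
    tamariLE (graftL (comb m σ) (rightChain (Ts.length - 1))) (buildRight Ts) := by
  intro Ts
  induction Ts with
  | nil => intro h; exact absurd rfl h
  | cons T rest ih =>
    intro _ hpieces σ hσ
    obtain ⟨n1, hn1, hT⟩ := hpieces T (by simp)
    cases rest with
    | nil =>
      simp only [List.map_cons, List.map_nil, List.sum_cons, List.sum_nil, Nat.add_zero] at hσ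
      have hσn : σ = n1 := Nat.eq_of_mul_eq_mul_right (by omega : 0 < m) (hσ.trans hn1.symm)
      have e1 : (([T] : List BinTree).length - 1) = 0 := rfl
      rw [e1]
      show tamariLE (graftL (comb m σ) leaf) (buildRight [T])
      rw [graftL_leaf]
      have e2 : buildRight [T] = T := graftL_leaf T
      rw [e2, hσn]
      exact hT
    | cons U rest' =>
      set rest := U :: rest' with hrest
      -- σ' for the rest
      have hdvd : m ∣ (rest.map size).sum := by
        apply List.dvd_sum
        intro x hx
        simp only [List.mem_map] at hx
        obtain ⟨y, hy, rfl⟩ := hx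
        obtain ⟨ny, hny, _⟩ := hpieces y (List.mem_cons_of_mem T hy)
        exact Dvd.intro_left ny hny
      obtain ⟨σ', hσ'⟩ := hdvd
      have hσ'2 : σ' * m = (rest.map size).sum := by rw [hσ', mul_comm]
      have hsplit : σ = n1 + σ' := by
        apply Nat.eq_of_mul_eq_mul_right (by omega : 0 < m)
        rw [hσ, Nat.add_mul, hn1, hσ'2]
        simp [hrest]
      have hlen : (T :: rest).length - 1 = rest.length := by simp
      rw [hlen]
      have hrlen : rest.length = rest'.length + 1 := by simp [hrest]
      have hrc : rightChain rest.length = node leaf (rightChain (rest.length - 1)) := by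
        rw [hrlen]; rfl
      rw [hsplit, hrc]
      have step1 := tamari_H m σ' n1 (rightChain (rest.length - 1))
      refine step1.trans ?_
      have ihstep := ih (by simp [hrest]) (fun y hy => hpieces y (List.mem_cons_of_mem T hy)) σ' hσ'2
      have step2 : tamariLE
          (graftL (comb m n1) (node leaf (graftL (comb m σ') (rightChain (rest.length - 1)))))
          (graftL T (node leaf (buildRight rest))) :=
        tamariLE_graftL hT (tamariLE_node_right ihstep)
      refine step2.trans ?_
      have e3 : buildRight (T :: rest) = graftL T (node leaf (buildRight rest)) := by
        show graftL T (buildAux rest) = _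
        rw [buildAux_nonempty rest (by simp [hrest])]
      rw [e3]
      exact tamariLE.refl _

lemma isMBinary_tamari (m : ℕ) (hm : 1 ≤ m) :
    ∀ {T : BinTree}, IsMBinary m T → ∀ nT, nT * m = T.size → tamariLE (comb m nT) T := by
  intro T h
  induction h with
  | leaf =>
    intro nT hnT
    simp only [size] at hnT
    have : nT = 0 := by
      rcases Nat.eq_zero_or_pos nT with h | h
      · exact h
      · have : 1 * m ≤ nT * m := Nat.mul_le_mul_right m h
        omega
    rw [this]
    exact tamariLE.refl _
  | node TL TRs hlen hTL hTRs ihTL ihTRs =>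
    intro nT hnT
    have hne : TRs ≠ [] := by intro h; rw [h] at hlen; simp at hlen; omega
    -- k for TL
    obtain ⟨k, hk⟩ := isMBinary_dvd_size m hm hTL
    have hk2 : k * m = TL.size := by rw [hk, mul_comm]
    -- σ' for TRs
    have hdvd : m ∣ (TRs.map size).sum := by
      apply List.dvd_sum
      intro x hx
      simp only [List.mem_map] at hx
      obtain ⟨y, hy, rfl⟩ := hx
      exact isMBinary_dvd_size m hm (hTRs y hy)
    obtain ⟨σ', hσ'⟩ := hdvd
    have hσ'2 : σ' * m = (TRs.map size).sum := by rw [hσ', mul_comm]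
    -- size computation
    cases TRs with
    | nil => exact absurd rfl hne
    | cons S rest =>
      have hbsz := buildRight_size S rest
      have hszT : (node TL (buildRight (S :: rest))).size
          = TL.size + (((S :: rest).map size).sum + rest.length) + 1 := by
        simp only [size, hbsz]
      have hrl : rest.length = m - 1 := by simp at hlen; omega
      have hnT2 : nT = k + 1 + σ' := by
        apply Nat.eq_of_mul_eq_mul_right (by omega : 0 < m)
        rw [hnT, hszT, ← hk2, ← hσ'2, hrl]
        ring_nf
        omega
      rw [hnT2]
      refine (tamari_F m σ' k).trans ?_
      refine tamariLE_node (ihTL k hk2) ?_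
      have hlenrc : (S :: rest).length - 1 = m - 1 := by simp [hrl]
      rw [← hlenrc]
      exact tamari_buildRight m hm (S :: rest) (by simp)
        (fun y hy => ⟨y.size / m, by
          obtain ⟨c, hc⟩ := isMBinary_dvd_size m hm (hTRs y hy)
          constructor
          · rw [hc]; rw [Nat.mul_div_cancel_left c (by omega : 0 < m), mul_comm]
          · refine ihTRs y hy _ ?_
            rw [hc, Nat.mul_div_cancel_left c (by omega : 0 < m), mul_comm]⟩)
        σ' hσ'2

lemma isMBinary_comb (m : ℕ) (hm : 1 ≤ m) : ∀ n, IsMBinary m (comb m n) := by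
  intro n
  induction n with
  | zero => exact IsMBinary.leaf
  | succ n ih =>
    have e : comb m (n + 1) = node (comb m n) (buildRight (List.replicate m leaf)) := by
      show node (comb m n) (rightChain (m-1)) = _
      have : buildRight (List.replicate m leaf) = rightChain (m - 1) := by
        obtain ⟨m', rfl⟩ : ∃ m', m = m' + 1 := ⟨m - 1, by omega⟩
        show buildRight (leaf :: List.replicate m' leaf) = rightChain (m' + 1 - 1)
        simp only [buildRight, graftL, Nat.add_sub_cancel]
        exact buildAux_replicate m'
      rw [this]
    rw [e]
    exact IsMBinary.node _ _ (by simp) ih (by intro S hS; rw [List.eq_of_mem_replicate hS]; exact IsMBinary.leaf)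

lemma tamari_goodIn (m : ℕ) {C T : BinTree} (h : tamariLE C T) (o : ℕ)
    (hg : goodIn m C o) : goodIn m T o := by
  induction h with
  | refl => exact hg
  | tail hab hbc ih =>
    intro b hb1 hb2 hbm
    have hsz : _ = _ := rot_size hbc
    have := ih b hb1 (by omega) hbm
    exact rot_sub_gt hbc o (b + 1) b (by omega) this
open BinTree

lemma mCond_iff_goodIn (m n : ℕ) (hm : 1 ≤ m) (hn : 1 ≤ n) (T : BinTree)
    (hT : T.size = n * m) : mCond m n T ↔ goodIn m T 0 := by
  constructor
  · intro h b hb1 hb2 hbm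
    rw [hT] at hb2
    obtain ⟨d, r, hbd, hrm⟩ : ∃ d r, m * d + r = b ∧ r < m :=
      ⟨b / m, b % m, Nat.div_add_mod b m, Nat.mod_lt b (by omega)⟩
    have hr0 : r ≠ 0 := by
      intro h0
      rw [h0, Nat.add_zero] at hbd
      exact hbm ⟨d, hbd.symm⟩
    have hdn : d < n := by
      have h1 : m * d < m * n := by
        have : b < m * n := by rw [mul_comm]; omega
        omega
      exact Nat.lt_of_mul_lt_mul_left h1
    have key : (d + 1) * m - (m - r) = b := by
      have e1 : (d + 1) * m = d * m + m := by ring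
      rw [e1, mul_comm d m]
      omega
    have hA : 1 ≤ d + 1 := by omega
    have hB : d + 1 ≤ n := by omega
    have hC : 1 ≤ m - r := by omega
    have hD : m - r < m := by omega
    have := h (d + 1) (m - r) hA hB hC hD
    rw [key] at this
    simpa using this
  · intro h i j hi1 hin hj1 hjm
    set b := i * m - j with hb
    have him : m ≤ i * m := Nat.le_mul_of_pos_left m (by omega)
    have hnm : i * m ≤ n * m := Nat.mul_le_mul_right m hin
    have hb1 : 0 + 1 ≤ b := by omega
    have hb2 : b + 1 ≤ 0 + T.size := by rw [hT]; omega
    have hbm : ¬ (m ∣ b) := by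
      intro hdvd
      have h1 : m ∣ i * m := dvd_mul_left m i
      have h2 : m ∣ i * m - b := Nat.dvd_sub h1 hdvd
      have h3 : i * m - b = j := by omega
      rw [h3] at h2
      have := Nat.le_of_dvd (by omega) h2
      omega
    have := h b hb1 hb2 hbm
    simpa [hb] using this

/-- For a binary tree `T` of size `n·m`, the following are equivalent: `T` is
an `m`-binary tree; the binary-search-tree labelling of `T` satisfies the chain
condition; `T` is above the `(n,m)`-comb in the Tamari order.  In particular
the upper ideal generated by the comb is the set of `m`-binary trees. -/
theorem stmt14 (m n : ℕ) (hm : 1 ≤ m) (hn : 1 ≤ n) (T : BinTree)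
    (hT : T.size = n * m) :
    (IsMBinary m T ↔ mCond m n T) ∧
    (IsMBinary m T ↔ tamariLE (comb m n) T) ∧
    ({T' : BinTree | T'.size = n * m ∧ tamariLE (comb m n) T'} =
      {T' : BinTree | T'.size = n * m ∧ IsMBinary m T'}) := by
  have key : ∀ T' : BinTree, T'.size = n * m →
      ((IsMBinary m T' ↔ mCond m n T') ∧ (IsMBinary m T' ↔ tamariLE (comb m n) T')) := by
    intro T' hT'
    have h1 : IsMBinary m T' → goodIn m T' 0 :=
      fun h => isMBinary_goodIn m hm h 0 (dvd_zero m)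
    have h2 : goodIn m T' 0 → IsMBinary m T' := by
      intro hg
      exact ((goodIn_isMBinary_aux m hm (2 * T'.size)).1) T' 0 le_rfl (dvd_zero m)
        (by rw [Nat.zero_add, hT']; exact dvd_mul_left m n) hg
    have h3 : IsMBinary m T' → tamariLE (comb m n) T' := by
      intro h
      exact isMBinary_tamari m hm h n (by rw [hT'])
    have h4 : tamariLE (comb m n) T' → goodIn m T' 0 := by
      intro h
      have hcg : goodIn m (comb m n) 0 :=
        isMBinary_goodIn m hm (isMBinary_comb m hm n) 0 (dvd_zero m)
      exact tamari_goodIn m h 0 hcg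
    constructor
    · exact ⟨fun h => (mCond_iff_goodIn m n hm hn T' hT').mpr (h1 h),
        fun h => h2 ((mCond_iff_goodIn m n hm hn T' hT').mp h)⟩
    · exact ⟨h3, fun h => h2 (h4 h)⟩
  refine ⟨(key T hT).1, (key T hT).2, ?_⟩
  ext T'
  simp only [Set.mem_setOf_eq]
  constructor
  · rintro ⟨hs, ht⟩
    exact ⟨hs, ((key T' hs).2).mpr ht⟩
  · rintro ⟨hs, ht⟩
    exact ⟨hs, ((key T' hs).2).mp ht⟩
end
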